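/- For integers m ≥ 2 and 1 ≤ l ≤ m, χ(f*_m, l) = χ(f*_m, m), where χ(f, l) = max({j·f(j)-f(j+1) : 1 ≤ j ≤ l-1} ∪ {(l-1)·f(l)}). -/

import Mathlib

/-- The optimal distribution rule `f*_k(j)` for covering games of cardinality `k`. -/
noncomputable def fstar (k j : ℕ) : ℝ :=
  (Nat.factorial (j - 1) : ℝ) *
    (1 / (((k - 1) * Nat.factorial (k - 1) : ℕ) : ℝ) +
      ∑ i ∈ Finset.Icc j (k - 1), (1 : ℝ) / (Nat.factorial i : ℝ)) /
  (1 / (((k - 1) * Nat.factorial (k - 1) : ℕ) : ℝ) +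
      ∑ i ∈ Finset.Icc 1 (k - 1), (1 : ℝ) / (Nat.factorial i : ℝ))

/-- `χ(f,l)`: the maximum of `{j·f(j) - f(j+1) : 1 ≤ j ≤ l-1} ∪ {(l-1)·f(l)}`. -/
noncomputable def chi (f : ℕ → ℝ) (l : ℕ) : ℝ :=
  (Finset.Icc 1 (l - 1)).fold max (((l - 1 : ℕ) : ℝ) * f l)
    (fun j : ℕ => (j : ℝ) * f j - f (j + 1))

noncomputable def Sm (m j : ℕ) : ℝ :=
  1 / (((m - 1) * Nat.factorial (m - 1) : ℕ) : ℝ) +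
    ∑ i ∈ Finset.Icc j (m - 1), (1 : ℝ) / (Nat.factorial i : ℝ)

lemma castpos (m : ℕ) (hm : 2 ≤ m) :
    (0:ℝ) < (((m - 1) * Nat.factorial (m - 1) : ℕ) : ℝ) := by
  have : 0 < (m - 1) * Nat.factorial (m - 1) :=
    Nat.mul_pos (by omega) (Nat.factorial_pos _)
  exact_mod_cast this

lemma Sm_pos (m j : ℕ) (hm : 2 ≤ m) : 0 < Sm m j := by
  have h1 := castpos m hm
  have h2 : (0:ℝ) ≤ ∑ i ∈ Finset.Icc j (m - 1), (1 : ℝ) / (Nat.factorial i : ℝ) := by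
    apply Finset.sum_nonneg; intro i _; positivity
  have := one_div_pos.mpr h1
  unfold Sm; linarith

lemma Sm_succ (m j : ℕ) (hj : 1 ≤ j) (hjm : j ≤ m - 1) :
    Sm m j = 1 / (Nat.factorial j : ℝ) + Sm m (j + 1) := by
  unfold Sm
  rw [show Finset.Icc j (m-1) = insert j (Finset.Icc (j+1) (m-1)) by
    ext x; simp only [Finset.mem_Icc, Finset.mem_insert]; omega]
  rw [Finset.sum_insert (by simp)]
  ring

lemma fact_cast (l : ℕ) (hl : 1 ≤ l) :
    (Nat.factorial l : ℝ) = (l : ℝ) * (Nat.factorial (l - 1) : ℝ) := by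
  have h : l - 1 + 1 = l := by omega
  rw [← h, Nat.factorial_succ]
  push_cast [h]
  ring

lemma fstar_eq (m j : ℕ) : fstar m j = (Nat.factorial (j-1) : ℝ) * Sm m j / Sm m 1 := rfl

lemma key_ineq (m : ℕ) (hm : 2 ≤ m) :
    ∀ n l, 2 ≤ l → l ≤ m → m - l = n →
      ((l - 1 : ℕ) : ℝ) * (Nat.factorial (l - 1) : ℝ) * Sm m l ≤ 1 := by
  intro n
  induction n with
  | zero =>
    intro l hl hlm hn
    have : l = m := by omega
    subst this
    have hIcc : Finset.Icc l (l - 1) = ∅ := by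
      apply Finset.Icc_eq_empty; omega
    have hpos := castpos l hl
    unfold Sm
    rw [hIcc]
    simp only [Finset.sum_empty, add_zero]
    rw [Nat.cast_mul] at hpos ⊢
    rw [mul_one_div, div_le_one hpos]
  | succ n ih =>
    intro l hl hlm hn
    have hlm1 : l ≤ m - 1 := by omega
    have ihl : ((l : ℕ) : ℝ) * (Nat.factorial l : ℝ) * Sm m (l + 1) ≤ 1 := by
      have := ih (l + 1) (by omega) (by omega) (by omega)
      simpa using this
    rw [Sm_succ m l (by omega) hlm1]
    have hx : 0 < Sm m (l + 1) := Sm_pos m (l+1) hm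
    have hF : (0:ℝ) < (Nat.factorial (l-1) : ℝ) := by exact_mod_cast Nat.factorial_pos _
    have hfact := fact_cast l (by omega)
    have hl2 : (2:ℝ) ≤ (l:ℝ) := by exact_mod_cast hl
    have hcast : ((l - 1 : ℕ) : ℝ) = (l : ℝ) - 1 := by
      have : (1:ℕ) ≤ l := by omega
      push_cast [this]; ring
    rw [hcast]
    rw [hfact] at ihl
    have hlpos : (0:ℝ) < (l:ℝ) := by linarith
    rw [mul_add]
    have h1 : ((l:ℝ) - 1) * (Nat.factorial (l-1) : ℝ) * (1 / (Nat.factorial l : ℝ)) =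
        ((l:ℝ) - 1) / (l:ℝ) := by
      rw [hfact]; field_simp
    rw [h1]
    have h2 : ((l:ℝ) - 1) * (Nat.factorial (l-1) : ℝ) * Sm m (l+1) ≤
        ((l:ℝ)-1)/((l:ℝ)*(l:ℝ)) := by
      rw [le_div_iff₀ (by positivity)]
      nlinarith [mul_nonneg (by linarith : (0:ℝ) ≤ (l:ℝ)-1)
        (by nlinarith : (0:ℝ) ≤ 1 - (l:ℝ)*((l:ℝ)*(Nat.factorial (l-1):ℝ))*Sm m (l+1))]
    have h3 : ((l:ℝ) - 1) / (l:ℝ) + ((l:ℝ)-1)/((l:ℝ)*(l:ℝ)) ≤ 1 := by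
      rw [div_add_div _ _ (ne_of_gt hlpos) (by positivity), div_le_one (by positivity)]
      nlinarith
    linarith

lemma bracket_eq (m j : ℕ) (hm : 2 ≤ m) (hj : 1 ≤ j) (hjm : j ≤ m - 1) :
    (j : ℝ) * fstar m j - fstar m (j + 1) = 1 / Sm m 1 := by
  have hD : 0 < Sm m 1 := Sm_pos m 1 hm
  rw [fstar_eq, fstar_eq]
  have hj1 : (j + 1) - 1 = j := by omega
  rw [hj1]
  rw [show (j:ℝ) * ((Nat.factorial (j-1):ℝ) * Sm m j / Sm m 1)
      = (j:ℝ) * ((Nat.factorial (j-1):ℝ) * Sm m j) / Sm m 1 from (mul_div_assoc _ _ _).symm,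
    div_sub_div_same]
  congr 1
  rw [Sm_succ m j hj hjm, fact_cast j hj]
  have hFj : (0:ℝ) < (Nat.factorial (j-1) : ℝ) := by exact_mod_cast Nat.factorial_pos _
  have hjpos : (0:ℝ) < (j:ℝ) := by exact_mod_cast hj
  field_simp
  ring

lemma base_eq (m : ℕ) (hm : 2 ≤ m) :
    ((m - 1 : ℕ) : ℝ) * fstar m m = 1 / Sm m 1 := by
  rw [fstar_eq]
  have hIcc : Finset.Icc m (m - 1) = ∅ := by apply Finset.Icc_eq_empty; omega
  have hSm : Sm m m = 1 / (((m - 1) * Nat.factorial (m - 1) : ℕ) : ℝ) := by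
    unfold Sm; rw [hIcc]; simp
  rw [hSm]
  have hpos := castpos m hm
  rw [show ((m-1:ℕ):ℝ) * ((Nat.factorial (m-1):ℝ) *
      (1 / (((m - 1) * Nat.factorial (m - 1) : ℕ) : ℝ)) / Sm m 1)
      = (((m-1:ℕ):ℝ) * (Nat.factorial (m-1):ℝ) *
        (1 / (((m - 1) * Nat.factorial (m - 1) : ℕ) : ℝ))) / Sm m 1 by ring]
  congr 1
  rw [Nat.cast_mul] at hpos ⊢
  rw [mul_one_div, div_self (ne_of_gt hpos)]

lemma chi_eq (m l : ℕ) (hm : 2 ≤ m) (hl : 2 ≤ l) (hlm : l ≤ m) :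
    chi (fstar m) l = 1 / Sm m 1 := by
  unfold chi
  apply le_antisymm
  · rw [Finset.fold_max_le]
    constructor
    · have hkey := key_ineq m hm (m - l) l hl hlm rfl
      have hD : 0 < Sm m 1 := Sm_pos m 1 hm
      rw [fstar_eq, ← mul_div_assoc, div_le_div_iff₀ hD hD, one_mul, ← mul_assoc]
      nlinarith
    · intro j hj
      rw [Finset.mem_Icc] at hj
      rw [bracket_eq m j hm hj.1 (by omega)]
  · rw [Finset.le_fold_max]
    right
    exact ⟨1, Finset.mem_Icc.mpr ⟨le_refl 1, by omega⟩,
      (bracket_eq m 1 hm (le_refl 1) (by omega)).ge⟩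

theorem stmt_18 (m l : ℕ) (hm : 2 ≤ m) (hl : 2 ≤ l) (hlm : l ≤ m) :
    chi (fstar m) l = chi (fstar m) m := by
  rw [chi_eq m l hm hl hlm, chi_eq m m hm hm (le_refl m)]
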